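/- Under the assumptions of the Multiple Imitation Gradient analysis (per-step factor 1/4 contraction toward θ_n* and γ-smoothness of each f_n with ∇f_n(θ_n*) = 0), the dynamic regret satisfies R_D = Σ_{n=1}^N (f_n(θ_n) - f_n(θ_n*)) ≤ 2γ S(θ*_{1:N}) + γ‖θ₁ - θ₁*‖². -/

import Mathlib

open Finset

/-- Lemma (Zhang et al., Theorem 3): under the factor-1/4 per-round contraction
and γ-smoothness with vanishing gradient at each minimizer, the dynamic regret
satisfies R_D ≤ 2γ S(θ*_{1:N}) + γ‖θ₁ - θ₁*‖². -/
theorem mig_dynamic_regret_bound {d : ℕ}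
    (θ θs : ℕ → EuclideanSpace ℝ (Fin d))
    (f : ℕ → EuclideanSpace ℝ (Fin d) → ℝ)
    (g : ℕ → EuclideanSpace ℝ (Fin d) → EuclideanSpace ℝ (Fin d))
    (γ : ℝ) (hγ : 0 < γ)
    (hsm : ∀ n x y, f n y ≤ f n x + (inner ℝ (g n x) (y - x) : ℝ) + (γ / 2) * ‖x - y‖ ^ 2)
    (hgrad0 : ∀ n, g n (θs n) = 0)
    (hcontract : ∀ n, ‖θ (n + 1) - θs n‖ ^ 2 ≤ (1 / 4) * ‖θ n - θs n‖ ^ 2)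
    (N : ℕ) :
    ∑ n ∈ Finset.range N, (f n (θ n) - f n (θs n)) ≤
      2 * γ * (∑ n ∈ Finset.range (N - 1), ‖θs n - θs (n + 1)‖ ^ 2) +
        γ * ‖θ 0 - θs 0‖ ^ 2 := by
  set a : ℕ → ℝ := fun n => ‖θ n - θs n‖ ^ 2 with ha
  set s : ℕ → ℝ := fun n => ‖θs n - θs (n + 1)‖ ^ 2 with hs
  have hstep : ∀ n, a (n + 1) ≤ (1 / 2) * a n + 2 * s n := by
    intro n
    have htri : ‖θ (n + 1) - θs (n + 1)‖ ≤ ‖θ (n + 1) - θs n‖ + ‖θs n - θs (n + 1)‖ :=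
      norm_sub_le_norm_sub_add_norm_sub _ _ _
    have h1 : ‖θ (n + 1) - θs (n + 1)‖ ^ 2 ≤
        (‖θ (n + 1) - θs n‖ + ‖θs n - θs (n + 1)‖) ^ 2 := by
      have hnn : (0:ℝ) ≤ ‖θ (n + 1) - θs (n + 1)‖ := norm_nonneg _
      nlinarith
    have h3 := hcontract n
    simp only [ha, hs]
    nlinarith [sq_nonneg (‖θ (n + 1) - θs n‖ - ‖θs n - θs (n + 1)‖)]
  have hsum : ∀ M, ∑ n ∈ range M, a n ≤ 2 * a 0 + 4 * ∑ n ∈ range (M - 1), s n := by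
    intro M
    match M with
    | 0 =>
      simp only [range_zero, sum_empty, Nat.zero_sub]
      have : (0:ℝ) ≤ a 0 := by simp only [ha]; positivity
      linarith
    | Nat.succ M =>
      have h1 : ∑ n ∈ range (M + 1), a n = ∑ n ∈ range M, a (n + 1) + a 0 :=
        Finset.sum_range_succ' a M
      have h2 : ∑ n ∈ range M, a (n + 1) ≤ ∑ n ∈ range M, ((1 / 2) * a n + 2 * s n) :=
        Finset.sum_le_sum fun n _ => hstep n
      have h3 : ∑ n ∈ range M, ((1 / 2) * a n + 2 * s n) =
          (1 / 2) * ∑ n ∈ range M, a n + 2 * ∑ n ∈ range M, s n := by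
        rw [Finset.sum_add_distrib, Finset.mul_sum, Finset.mul_sum]
      have h4 : ∑ n ∈ range M, a n ≤ ∑ n ∈ range (M + 1), a n := by
        apply Finset.sum_le_sum_of_subset_of_nonneg (Finset.range_subset_range.2 (Nat.le_succ M))
        exact fun i _ _ => pow_nonneg (norm_nonneg _) 2
      simp only [Nat.succ_sub_one]
      linarith
  have hf : ∀ n, f n (θ n) - f n (θs n) ≤ (γ / 2) * a n := by
    intro n
    have h := hsm n (θs n) (θ n)
    rw [hgrad0 n] at h
    rw [inner_zero_left] at h
    have hn : ‖θs n - θ n‖ = ‖θ n - θs n‖ := norm_sub_rev _ _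
    rw [hn] at h
    simp only [ha]
    linarith
  calc ∑ n ∈ range N, (f n (θ n) - f n (θs n))
      ≤ ∑ n ∈ range N, (γ / 2) * a n := Finset.sum_le_sum fun n _ => hf n
    _ = (γ / 2) * ∑ n ∈ range N, a n := (Finset.mul_sum _ _ _).symm
    _ ≤ (γ / 2) * (2 * a 0 + 4 * ∑ n ∈ range (N - 1), s n) := by
        apply mul_le_mul_of_nonneg_left (hsum N) (by positivity)
    _ = 2 * γ * (∑ n ∈ range (N - 1), s n) + γ * a 0 := by ring
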